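/- For all p ∈ (0,1) and integers n ≥ 2, the ratio of the exponential mechanism's expected error to that of permute-and-flip on q = (c,...,c,0), namely ((1 - 1/(1+(n-1)p)) / (1 - (1-(1-p)^n)/(np)), is at most 2. -/

import Mathlib

theorem stmt_12 (n : ℕ) (hn : 2 ≤ n) (p : ℝ) (hp : p ∈ Set.Ioo (0 : ℝ) 1) :
    (1 - 1 / (1 + (n - 1) * p)) / (1 - (1 - (1 - p) ^ n) / (n * p)) ≤ 2 := by
  obtain ⟨hp0, hp1⟩ := hp
  have hn2 : (2:ℝ) ≤ (n:ℝ) := by exact_mod_cast hn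
  have hm1 : (1:ℝ) ≤ (n:ℝ) - 1 := by linarith
  have hnpos : (0:ℝ) < (n:ℝ) := by linarith
  set A : ℝ := 1 + ((n:ℝ) - 1) * p with hAdef
  have hA : (0:ℝ) < A := by nlinarith
  -- per-term bound: kp/A ≤ 1 - (1-p)^k for k < n
  have key : ∀ k ∈ Finset.range n, (k:ℝ) * p / A ≤ 1 - (1-p)^k := by
    intro k hk
    have hk' : (k:ℝ) ≤ (n:ℝ) - 1 := by
      have h := Finset.mem_range.mp hk
      have : (k:ℝ) + 1 ≤ (n:ℝ) := by exact_mod_cast h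
      linarith
    have hXnn : (0:ℝ) ≤ (1-p)^k := pow_nonneg (by linarith) k
    have hX1 : (1-p)^k ≤ 1 := pow_le_one₀ (by linarith) (by linarith)
    have hb : (1 + (k:ℝ)*p) * (1-p)^k ≤ 1 := by
      have h1 : 1 + (k:ℝ)*p ≤ (1+p)^k := one_add_mul_le_pow (by linarith) k
      calc (1 + (k:ℝ)*p) * (1-p)^k ≤ (1+p)^k * (1-p)^k :=
            mul_le_mul_of_nonneg_right h1 hXnn
        _ = ((1+p)*(1-p))^k := (mul_pow _ _ _).symm
        _ ≤ 1 := by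
            apply pow_le_one₀ <;> nlinarith
    rw [div_le_iff₀ hA]
    nlinarith [mul_nonneg (mul_nonneg (sub_nonneg.mpr hk') hp0.le) (sub_nonneg.mpr hX1),
      (Nat.cast_nonneg k : (0:ℝ) ≤ (k:ℝ))]
  -- geometric sum identity
  have geom : (1:ℝ) - (1-p)^n = p * ∑ k ∈ Finset.range n, (1-p)^k := by
    have h := geom_sum_mul (1-p) n
    nlinarith [h]
  -- Gauss sum
  have gauss : (∑ k ∈ Finset.range n, (k:ℝ)) * 2 = (n:ℝ) * ((n:ℝ) - 1) := by
    have h := Finset.sum_range_id_mul_two n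
    have h1 : 1 ≤ n := by omega
    have := congrArg (Nat.cast : ℕ → ℝ) h
    push_cast [Nat.cast_sub h1] at this
    linarith
  -- sum comparison
  have hsum : ∑ k ∈ Finset.range n, (k:ℝ) * p / A ≤
      ∑ k ∈ Finset.range n, (1 - (1-p)^k) := Finset.sum_le_sum key
  have hLHS : ∑ k ∈ Finset.range n, (k:ℝ) * p / A
      = (n:ℝ) * ((n:ℝ) - 1) * p / (2 * A) := by
    rw [← Finset.sum_div, ← Finset.sum_mul]
    rw [show (n:ℝ) * ((n:ℝ) - 1) = (∑ k ∈ Finset.range n, (k:ℝ)) * 2 from gauss.symm]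
    field_simp
  have hRHS : ∑ k ∈ Finset.range n, ((1:ℝ) - (1-p)^k)
      = (n:ℝ) - (∑ k ∈ Finset.range n, (1-p)^k) := by
    rw [Finset.sum_sub_distrib, Finset.sum_const, Finset.card_range]
    simp
  -- denominator bound
  have hnp : (0:ℝ) < (n:ℝ) * p := by positivity
  have hD : ((n:ℝ) - 1) * p / (2 * A) ≤ 1 - (1 - (1-p)^n) / ((n:ℝ) * p) := by
    rw [hLHS, hRHS] at hsum
    have h2A : (0:ℝ) < 2 * A := by linarith
    have h1 : (n:ℝ) * ((n:ℝ) - 1) * p ≤ ((n:ℝ) - ∑ k ∈ Finset.range n, (1-p)^k) * (2 * A) :=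
      (div_le_iff₀ h2A).mp hsum
    rw [geom]
    have e1 : 1 - p * (∑ k ∈ Finset.range n, (1-p)^k) / ((n:ℝ) * p)
        = ((n:ℝ) - ∑ k ∈ Finset.range n, (1-p)^k) / (n:ℝ) := by
      field_simp
    rw [e1, div_le_div_iff₀ h2A hnpos]
    nlinarith [h1]
  have hDpos : (0:ℝ) < 1 - (1 - (1-p)^n) / ((n:ℝ) * p) := by
    have : (0:ℝ) < ((n:ℝ) - 1) * p / (2 * A) := by positivity
    linarith
  rw [div_le_iff₀ hDpos]
  have hnum : 1 - 1 / A = ((n:ℝ) - 1) * p / A := by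
    field_simp
    rw [hAdef]; ring
  rw [hnum]
  have : ((n:ℝ) - 1) * p / A = 2 * (((n:ℝ) - 1) * p / (2 * A)) := by
    field_simp
  rw [this]
  linarith [hD]
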